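/- Let a be a positive odd integer and let k be an integer with −a+4 ≤ k ≤ a−2 and k ≡ a−2 (mod 4). Then both 2 sin((a−2k)π/(2a)) and its inverse (2 sin((a−2k)π/(2a)))^{−1} are algebraic integers. -/

import Mathlib

open Polynomial in
lemma aux_int_of_pow {x : ℂ} {m : ℕ} (hm : m ≠ 0) (h : x ^ m = 1) : IsIntegral ℤ x := by
  refine ⟨X ^ m - C 1, monic_X_pow_sub_C 1 hm, ?_⟩
  simp [Polynomial.eval₂_sub, h]

open Polynomial in
lemma aux_inv_one_sub {z : ℂ} {d : ℕ} (hd1 : 1 < d) (hz : IsPrimitiveRoot z d)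
    (hnp : ¬ IsPrimePow d) : IsIntegral ℤ (1 - z)⁻¹ := by
  have hd : 0 < d := by omega
  have hzi : IsIntegral ℤ z := aux_int_of_pow hd.ne' hz.pow_eq_one
  set A := integralClosure ℤ ℂ
  let zA : A := ⟨z, hzi⟩
  have hinj : Function.Injective (algebraMap A ℂ) := Subtype.val_injective
  have hev0 : aeval zA (cyclotomic d ℤ) = 0 := by
    apply hinj
    rw [map_zero]
    have h1 : algebraMap A ℂ (aeval zA (cyclotomic d ℤ))
        = aeval z (cyclotomic d ℤ) := by
      rw [← Polynomial.aeval_algebraMap_apply]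
      rfl
    rw [h1]
    have := hz.isRoot_cyclotomic hd
    rw [aeval_def, ← eval_map]
    simpa [Polynomial.IsRoot, Polynomial.map_cyclotomic] using this
  have hev1 : aeval (1 : A) (cyclotomic d ℤ) = 1 := by
    have h1 : (1 : A) = algebraMap ℤ A 1 := by simp
    rw [h1, Polynomial.aeval_algebraMap_apply]
    have hyp : ∀ {p : ℕ}, p.Prime → ∀ k : ℕ, p ^ k ≠ d := by
      intro p hp k hk
      rcases Nat.eq_zero_or_pos k with rfl | hk0
      · simp at hk; omega
      · exact hnp ⟨p, k, hp.prime, hk0, hk⟩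
    simp [Polynomial.eval_one_cyclotomic_not_prime_pow hyp]
  have hdvd : (1 - zA) ∣ 1 := by
    have h := Polynomial.sub_dvd_eval_sub (1 : A) zA
      ((cyclotomic d ℤ).map (algebraMap ℤ A))
    rw [eval_map, eval_map, ← aeval_def, ← aeval_def, hev0, hev1, sub_zero] at h
    exact h
  obtain ⟨c, hc⟩ := hdvd
  have key : (1 - z) * (c : ℂ) = 1 := by
    have h2 := congrArg (Subtype.val) hc
    simp only [Subalgebra.coe_mul, OneMemClass.coe_one] at h2
    have h3 : ((1 - zA : A) : ℂ) = 1 - z := by simp [zA]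
    rw [← h3]
    exact h2.symm
  rw [inv_eq_of_mul_eq_one_right key]
  exact c.2

open Complex in
/-- If `a` is a positive odd integer and `k ≡ a - 2 (mod 4)` with `-a+4 ≤ k ≤ a-2`, then
`2sin((a-2k)π/(2a))` and its inverse are algebraic integers. -/
theorem two_sin_isIntegral (a k : ℤ) (ha : 0 < a) (hao : Odd a)
    (h1 : -a + 4 ≤ k) (h2 : k ≤ a - 2) (hmod : k ≡ a - 2 [ZMOD 4]) :
    IsIntegral ℤ (2 * Real.sin ((a - 2 * k) * Real.pi / (2 * a))) ∧
      IsIntegral ℤ ((2 * Real.sin ((a - 2 * k) * Real.pi / (2 * a)))⁻¹) := by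
  obtain ⟨t, ht⟩ := hao
  have hmod' : k % 4 = (a - 2) % 4 := hmod
  have hk0 : k ≠ 0 := by omega
  set n : ℤ := a - 2 * k with hn
  -- reduce to ℂ
  have hred : ∀ x : ℝ, IsIntegral ℤ (x : ℂ) → IsIntegral ℤ x := by
    intro x hx
    exact (isIntegral_algebraMap_iff (Complex.ofReal_injective)).mp hx
  set w : ℂ := ((a : ℂ) - 2 * k) * (Real.pi : ℂ) / (2 * a) with hw
  have haC : (a : ℂ) ≠ 0 := by
    simp only [ne_eq, Int.cast_eq_zero]; omega
  have hcast : ((((a : ℝ) - 2 * k) * Real.pi / (2 * a) : ℝ) : ℂ) = w := by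
    push_cast [hw]; ring
  have hsin : (((2 * Real.sin ((a - 2 * k) * Real.pi / (2 * a)) : ℝ)) : ℂ)
      = 2 * Complex.sin w := by
    push_cast [← hcast, Complex.ofReal_sin]
    norm_num
  set u : ℂ := Complex.exp (w * I) with hu_def
  have hsin2 : 2 * Complex.sin w = (u⁻¹ - u) * I := by
    rw [Complex.two_sin, neg_mul, Complex.exp_neg]
  -- u is a 4a-th root of unity
  set aN : ℕ := a.toNat with haN_def
  have haN : (aN : ℤ) = a := Int.toNat_of_nonneg ha.le
  set M : ℕ := 4 * aN with hM_def
  have hM0 : M ≠ 0 := by omega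
  have huM : u ^ M = 1 := by
    rw [hu_def, ← Complex.exp_nat_mul]
    have : (M : ℂ) * (w * I) = (n : ℂ) * (2 * Real.pi * I) := by
      have hMC : (M : ℂ) = 4 * (a : ℂ) := by
        have : (M : ℤ) = 4 * a := by omega
        exact_mod_cast congrArg (Int.cast : ℤ → ℂ) this
      rw [hMC, hw]
      push_cast [hn]
      field_simp
      ring
    rw [this, Complex.exp_int_mul_two_pi_mul_I]
  have hu_int : IsIntegral ℤ u := aux_int_of_pow hM0 huM
  have huinv_int : IsIntegral ℤ u⁻¹ :=
    aux_int_of_pow hM0 (by rw [inv_pow, huM, inv_one])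
  have hI_int : IsIntegral ℤ I := by
    refine aux_int_of_pow (m := 4) (by norm_num) ?_
    norm_num [pow_succ, Complex.I_mul_I]
  have part1C : IsIntegral ℤ (2 * Complex.sin w) := by
    rw [hsin2]
    exact (huinv_int.sub hu_int).mul hI_int
  -- number theory setup
  set N : ℕ := 2 * aN with hN_def
  have hN0 : N ≠ 0 := by omega
  set m : ℕ := (n % (2 * a)).toNat with hm_def
  have hm : (m : ℤ) = n % (2 * a) := Int.toNat_of_nonneg (Int.emod_nonneg n (by omega))
  have hm_lt : (m : ℤ) < 2 * a := by
    have := Int.emod_lt_of_pos n (show (0:ℤ) < 2 * a by omega); omega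
  have hqm : ∃ q : ℤ, n = 2 * a * q + (m : ℤ) := by
    refine ⟨n / (2 * a), ?_⟩
    rw [hm]
    have := Int.mul_ediv_add_emod n (2 * a)
    linarith
  obtain ⟨q, hqm⟩ := hqm
  have hqm2 : n = 2 * (a * q) + (m : ℤ) := by rw [← mul_assoc]; exact hqm
  have hm_odd : m % 2 = 1 := by omega
  have hma : (m : ℤ) ≠ a := by
    intro h
    have hk : k = a * (-q) := by rw [h] at hqm; linarith [hqm]
    have hdvd : a ∣ k := ⟨-q, hk⟩
    have := Int.eq_zero_of_abs_lt_dvd hdvd (abs_lt.mpr ⟨by omega, by omega⟩)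
    omega
  have hm0 : m ≠ 0 := by omega
  -- z = u^2 is ζ^m
  set ζ : ℂ := Complex.exp (2 * (Real.pi : ℂ) * I / N) with hζ_def
  have hζ : IsPrimitiveRoot ζ N := Complex.isPrimitiveRoot_exp N hN0
  have hNC : (N : ℂ) = 2 * (a : ℂ) := by
    have : (N : ℤ) = 2 * a := by omega
    exact_mod_cast congrArg (Int.cast : ℤ → ℂ) this
  have hzeq : u ^ 2 = ζ ^ m := by
    rw [hu_def, hζ_def, ← Complex.exp_nat_mul, ← Complex.exp_nat_mul]
    rw [Complex.exp_eq_exp_iff_exists_int]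
    refine ⟨q, ?_⟩
    rw [hNC, hw]
    have hnC : (a : ℂ) - 2 * k = 2 * (a : ℂ) * q + m := by
      have h := hqm
      rw [hn] at h
      have h2 := congrArg (fun z : ℤ => (z : ℂ)) h
      push_cast at h2
      linear_combination h2
    field_simp
    linear_combination (2 : ℂ) * hnC
  -- primitivity of ζ^m
  set g : ℕ := Nat.gcd m N with hg_def
  have hgm : g ∣ m := Nat.gcd_dvd_left m N
  have hgN : g ∣ N := Nat.gcd_dvd_right m N
  have hgpos : 0 < g := Nat.gcd_pos_of_pos_left N (by omega)
  set d : ℕ := N / g with hd_def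
  have hNd : g * d = N := Nat.mul_div_cancel' hgN
  have hprim : IsPrimitiveRoot (ζ ^ m) d := by
    have h1' : IsPrimitiveRoot (ζ ^ g) d := hζ.pow (by omega) hNd.symm
    have h2' := h1'.pow_of_coprime (m / g) (Nat.coprime_div_gcd_div_gcd hgpos)
    rwa [← pow_mul, Nat.mul_div_cancel' hgm] at h2'
  -- d = 2 * e with e odd, e ≠ 1
  have hgodd : ¬ 2 ∣ g := by
    intro h2
    have := h2.trans hgm
    omega
  have hga : g ∣ aN := by
    have hcop2 : Nat.Coprime g 2 := (Nat.coprime_comm.mp ((Nat.prime_two).coprime_iff_not_dvd.mpr hgodd))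
    refine hcop2.dvd_of_dvd_mul_right ?_
    rw [mul_comm aN 2, ← hN_def]
    exact hgN
  obtain ⟨e, he⟩ := hga
  have hd2 : d = 2 * e := by
    have h' : g * d = g * (2 * e) := by rw [hNd, hN_def, he]; ring
    exact Nat.eq_of_mul_eq_mul_left hgpos h'
  have haN_odd : aN % 2 = 1 := by omega
  have he_odd : e % 2 = 1 := by
    have haN_odd2 : Odd aN := Nat.odd_iff.mpr haN_odd
    have hmul : Odd (g * e) := he ▸ haN_odd2
    exact Nat.odd_iff.mp (Nat.odd_mul.mp hmul).2
  have he1 : e ≠ 1 := by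
    intro h
    rw [h, mul_one] at he
    have haNm : aN ∣ m := he ▸ hgm
    obtain ⟨c, hc⟩ := haNm
    have hc1 : c = 1 := by
      rcases Nat.lt_or_ge c 2 with h' | h'
      · interval_cases c
        · omega
        · rfl
      · exfalso
        have : aN * 2 ≤ aN * c := Nat.mul_le_mul_left aN h'
        omega
    rw [hc1, mul_one] at hc
    omega
  have hd_gt1 : 1 < d := by
    have : e ≠ 0 := by omega
    omega
  have hnp : ¬ IsPrimePow d := by
    rintro ⟨p, j, hp, hj, hpj⟩
    have hpN : Nat.Prime p := Nat.prime_iff.mpr hp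
    have h2d : (2 : ℕ) ∣ d := ⟨e, hd2⟩
    have h2p : 2 ∣ p := Nat.Prime.dvd_of_dvd_pow Nat.prime_two (hpj ▸ h2d)
    have hp2 : p = 2 := ((Nat.prime_dvd_prime_iff_eq Nat.prime_two hpN).mp h2p).symm
    rw [hp2] at hpj
    -- 2^j = d = 2*e, e odd
    have hj1 : j = 1 := by
      by_contra hj1
      have hj2 : 2 ≤ j := by omega
      have h4 : (4 : ℕ) ∣ d := by
        rw [← hpj]
        calc (4:ℕ) = 2 ^ 2 := by norm_num
        _ ∣ 2 ^ j := pow_dvd_pow 2 hj2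
      omega
    rw [hj1, pow_one] at hpj
    omega
  -- conclude
  have hprim' : IsPrimitiveRoot (u ^ 2) d := by rw [hzeq]; exact hprim
  have hkey : IsIntegral ℤ (1 - u ^ 2)⁻¹ := aux_inv_one_sub hd_gt1 hprim' hnp
  have hinv_eq : (2 * Complex.sin w)⁻¹ = u * ((1 - u ^ 2)⁻¹ * (-I)) := by
    rw [hsin2]
    have hu0 : u ≠ 0 := Complex.exp_ne_zero _
    have : (u⁻¹ - u) = u⁻¹ * (1 - u ^ 2) := by
      field_simp
    rw [this, mul_inv, mul_inv, inv_inv, Complex.inv_I]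
    ring
  have part2C : IsIntegral ℤ ((2 * Complex.sin w)⁻¹) := by
    rw [hinv_eq]
    exact hu_int.mul (hkey.mul hI_int.neg)
  constructor
  · apply hred
    rw [hsin]
    exact part1C
  · apply hred
    rw [Complex.ofReal_inv, hsin]
    exact part2C
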